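/- Characterization of timed dynamical systems: for every dynamical system (S,g) the following are equivalent: (1) (S,g) is timed; (2) for every n∈ℕ, whenever g(s)=g^{n+1}(w) there exists w'∈S with s=gⁿ(w'); (3) all maximal g-histories of the same state have the same length; (4) there exists an equivalence relation ≈ on S satisfying the two synchronicity conditions: s≈w if and only if g(s)≈g(w), and whenever s≈g(w) there exists w'∈S with s=g(w'). -/

import Mathlib

open Classical

/-- A timing map on a dynamical system `(S, g)`: it assigns `0` to every initial state (a state
not in the range of `g`), and satisfies `τ(g(s)) = τ(s) + 1` (with `∞ + 1 = ∞`). -/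
def IsTimingMap {S : Type} (g : S → S) (τ : S → ℕ∞) : Prop :=
  (∀ s, (∀ w, g w ≠ s) → τ s = 0) ∧ ∀ s, τ (g s) = τ s + 1

/-- `s` has a maximal `g`-history of length `l ∈ ℕ∞`: either `l = m` is finite and there is a
backward transition chain `s = s₀, s₁, …, s_m` with `s_n = g(s_{n+1})` whose last state `s_m`
is not in the range of `g`, or `l = ∞` and there is an infinite backward transition chain. -/
def HasMaxHistLen {S : Type} (g : S → S) (s : S) (l : ℕ∞) : Prop :=
  (∃ m : ℕ, l = (m : ℕ∞) ∧ ∃ h : ℕ → S, h 0 = s ∧ (∀ n < m, h n = g (h (n + 1))) ∧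
    ∀ w, g w ≠ h m) ∨
  (l = ⊤ ∧ ∃ h : ℕ → S, h 0 = s ∧ ∀ n, h n = g (h (n + 1)))

namespace TimedChar

lemma enat_eq_of_forall (a b : ℕ∞) (h : ∀ k : ℕ, (k:ℕ∞) ≤ a ↔ (k:ℕ∞) ≤ b) : a = b := by
  cases a with
  | top =>
    cases b with
    | top => rfl
    | coe n => have := (h (n+1)).mp le_top; norm_cast at this; omega
  | coe m =>
    cases b with
    | top => have := (h (m+1)).mpr le_top; norm_cast at this; omega
    | coe n =>
      have h1 := (h m).mp le_rfl
      have h2 := (h n).mpr le_rfl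
      norm_cast at h1 h2
      exact Nat.cast_inj.mpr (by omega)

variable {S : Type} (g : S → S)

noncomputable def tau (s : S) : ℕ∞ :=
  if h : ∃ n : ℕ, ∀ w, s ≠ g^[n] w then ((Nat.find h - 1 : ℕ) : ℕ∞) else ⊤

lemma le_tau_iff (s : S) (k : ℕ) :
    (k : ℕ∞) ≤ tau g s ↔ ∃ w, s = g^[k] w := by
  unfold tau
  split
  · next h =>
    have h0 : ¬ ∀ w, s ≠ g^[0] w := by push_neg; exact ⟨s, rfl⟩
    have hN : 1 ≤ Nat.find h := by
      rcases Nat.eq_zero_or_pos (Nat.find h) with h' | h'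
      · exact absurd (h' ▸ Nat.find_spec h) h0
      · exact h'
    rw [Nat.cast_le]
    constructor
    · intro hk
      have hlt : k < Nat.find h := by omega
      have := Nat.find_min h hlt
      push_neg at this
      exact this
    · rintro ⟨w, rfl⟩
      by_contra hk
      have : g^[k] w = g^[Nat.find h] (g^[k - Nat.find h] w) := by
        rw [← Function.iterate_add_apply]; congr 1; omega
      exact (Nat.find_spec h) _ this
  · next h =>
    push_neg at h
    simp [h k]

/-- Condition (2) implies timed. -/
lemma timed_of_cond2
    (h2 : ∀ (n : ℕ) (s w : S), g s = g^[n + 1] w → ∃ w', s = g^[n] w') :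
    ∃ τ, IsTimingMap g τ := by
  refine ⟨tau g, ?_, ?_⟩
  · intro s hs
    have h1 : ¬ (1 : ℕ∞) ≤ tau g s := by
      rw [show (1:ℕ∞) = ((1:ℕ):ℕ∞) by norm_cast, le_tau_iff]
      rintro ⟨w, hw⟩
      exact hs w (by simpa using hw.symm)
    have : tau g s < 1 := not_le.mp h1
    cases hts : tau g s with
    | top => rw [hts] at this; simp at this
    | coe n => rw [hts] at this; simp at this ⊢; omega
  · intro s
    apply enat_eq_of_forall
    intro k
    cases k with
    | zero => simp
    | succ n =>
      rw [le_tau_iff]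
      have : ((n+1 : ℕ) : ℕ∞) = (n : ℕ∞) + 1 := by push_cast; ring
      rw [this, ENat.add_le_add_iff_right (by simp : (1:ℕ∞) ≠ ⊤), le_tau_iff]
      constructor
      · rintro ⟨w, hw⟩; exact h2 n s w hw
      · rintro ⟨w, rfl⟩
        exact ⟨w, (Function.iterate_succ_apply' g n w).symm⟩

/-- From a timing map: states with `τ s ≥ n` are `n`-fold successors. -/
lemma iter_of_le_tau {τ : S → ℕ∞} (hτ : IsTimingMap g τ) :
    ∀ (n : ℕ) (s : S), (n : ℕ∞) ≤ τ s → ∃ w, s = g^[n] w := by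
  intro n
  induction n with
  | zero => intro s _; exact ⟨s, rfl⟩
  | succ n ih =>
    intro s hs
    have hne : τ s ≠ 0 := by
      intro h0
      rw [h0] at hs
      simp at hs
    have hrange : ∃ w, g w = s := by
      by_contra hc
      push_neg at hc
      exact hne (hτ.1 s hc)
    obtain ⟨w, rfl⟩ := hrange
    rw [hτ.2 w] at hs
    have : ((n+1 : ℕ) : ℕ∞) = (n : ℕ∞) + 1 := by push_cast; ring
    rw [this, ENat.add_le_add_iff_right (by simp : (1:ℕ∞) ≠ ⊤)] at hs
    obtain ⟨w', rfl⟩ := ih w hs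
    exact ⟨w', (Function.iterate_succ_apply' g n w').symm⟩

lemma tau_iterate {τ : S → ℕ∞} (hτ : IsTimingMap g τ) (n : ℕ) (w : S) :
    τ (g^[n] w) = τ w + n := by
  induction n with
  | zero => simp
  | succ n ih =>
    rw [Function.iterate_succ_apply', hτ.2, ih]
    push_cast
    ring

/-- Timed implies condition (2). -/
lemma cond2_of_timed (h : ∃ τ, IsTimingMap g τ) :
    ∀ (n : ℕ) (s w : S), g s = g^[n + 1] w → ∃ w', s = g^[n] w' := by
  obtain ⟨τ, hτ⟩ := h
  intro n s w hw
  have h1 : τ s + 1 = τ w + n + 1 := by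
    have := hτ.2 s
    rw [hw, tau_iterate g hτ] at this
    rw [← this]
    push_cast
    ring
  have h2 : τ s = τ w + n := WithTop.add_right_cancel (by simp : (1:ℕ∞) ≠ ⊤) h1
  apply iter_of_le_tau g hτ
  rw [h2]
  exact le_add_self

/-- Timed: each maximal history length is `τ s`. -/
lemma maxhist_eq_tau {τ : S → ℕ∞} (hτ : IsTimingMap g τ) (s : S) (l : ℕ∞)
    (hl : HasMaxHistLen g s l) : l = τ s := by
  rcases hl with ⟨m, rfl, h, h0, hstep, hlast⟩ | ⟨rfl, h, h0, hstep⟩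
  · have key : ∀ n ≤ m, τ s = τ (h n) + n := by
      intro n hn
      induction n with
      | zero => simp [h0]
      | succ n ih =>
        rw [ih (by omega), hstep n (by omega), hτ.2]
        push_cast
        ring
    have := key m le_rfl
    rw [hτ.1 (h m) hlast] at this
    rw [this, zero_add]
  · have key : ∀ n : ℕ, τ s = τ (h n) + n := by
      intro n
      induction n with
      | zero => simp [h0]
      | succ n ih =>
        rw [ih, hstep n, hτ.2]
        push_cast
        ring
    symm
    cases hts : τ s with
    | top => rfl
    | coe m =>
      exfalso
      have := key (m+1)
      rw [hts] at this
      cases htm : τ (h (m+1)) with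
      | top => rw [htm] at this; simp at this
      | coe j =>
        rw [htm] at this
        rw [show ((m:ℕ∞) = ((m:ℕ):ℕ∞)) from rfl] at this
        push_cast at this
        norm_cast at this; omega

/-- Timed implies condition (3). -/
lemma cond3_of_timed (h : ∃ τ, IsTimingMap g τ) :
    ∀ (s : S) (l₁ l₂ : ℕ∞), HasMaxHistLen g s l₁ → HasMaxHistLen g s l₂ → l₁ = l₂ := by
  obtain ⟨τ, hτ⟩ := h
  intro s l₁ l₂ h1 h2
  rw [maxhist_eq_tau g hτ s l₁ h1, maxhist_eq_tau g hτ s l₂ h2]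

/-- Every state has a maximal history. -/
lemma exists_maxhist (s : S) : ∃ l, HasMaxHistLen g s l := by
  set f : S → S := fun x => if h : ∃ w, g w = x then h.choose else x with hf
  have hstep : ∀ x, (∃ w, g w = x) → x = g (f x) := by
    intro x hx
    simp only [hf, dif_pos hx]
    exact hx.choose_spec.symm
  set h : ℕ → S := fun n => f^[n] s with hh
  have hsucc : ∀ n, h (n+1) = f (h n) := by
    intro n
    simp [hh, Function.iterate_succ_apply']
  by_cases hall : ∀ n, ∃ w, g w = h n
  · refine ⟨⊤, Or.inr ⟨rfl, h, rfl, fun n => ?_⟩⟩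
    rw [hsucc n]
    exact hstep (h n) (hall n)
  · push_neg at hall
    have hex : ∃ n, ∀ w, g w ≠ h n := hall
    refine ⟨(Nat.find hex : ℕ), Or.inl ⟨Nat.find hex, rfl, h, rfl, ?_, Nat.find_spec hex⟩⟩
    intro n hn
    have := Nat.find_min hex hn
    push_neg at this
    rw [hsucc n]
    exact hstep (h n) this

/-- Prepending one step to a maximal history. -/
lemma maxhist_succ {s : S} {l : ℕ∞} (hl : HasMaxHistLen g s l) :
    HasMaxHistLen g (g s) (l + 1) := by
  rcases hl with ⟨m, rfl, h, h0, hstep, hlast⟩ | ⟨rfl, h, h0, hstep⟩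
  · left
    refine ⟨m + 1, by push_cast; ring, fun n => if n = 0 then g s else h (n-1), by simp, ?_, ?_⟩
    · intro n hn
      cases n with
      | zero => simp [h0]
      | succ n =>
        simp only [Nat.succ_ne_zero, if_false, Nat.add_sub_cancel]
        exact hstep n (by omega)
    · simpa using hlast
  · right
    refine ⟨by simp, fun n => if n = 0 then g s else h (n-1), by simp, ?_⟩
    intro n
    cases n with
    | zero => simp [h0]
    | succ n =>
      simp only [Nat.succ_ne_zero, if_false, Nat.add_sub_cancel]
      exact hstep n

lemma maxhist_iterate {w : S} {l : ℕ∞} (hl : HasMaxHistLen g w l) (n : ℕ) :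
    HasMaxHistLen g (g^[n] w) (l + n) := by
  induction n with
  | zero => simpa using hl
  | succ n ih =>
    have := maxhist_succ g ih
    rw [Function.iterate_succ_apply']
    convert this using 1
    push_cast [Nat.cast_add]
    try ring

/-- Extracting an `n`-fold predecessor from a long enough history. -/
lemma iter_of_maxhist {s : S} {l : ℕ∞} (hl : HasMaxHistLen g s l) (n : ℕ)
    (hn : (n : ℕ∞) ≤ l) : ∃ w, s = g^[n] w := by
  have key : ∀ (h : ℕ → S), h 0 = s → (∀ k < n, h k = g (h (k+1))) → s = g^[n] (h n) := by
    intro h h0 hstep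
    have : ∀ k ≤ n, s = g^[k] (h k) := by
      intro k hk
      induction k with
      | zero => rw [h0]; rfl
      | succ k ih =>
        rw [ih (by omega), hstep k (by omega), Function.iterate_succ_apply]
    exact this n le_rfl
  rcases hl with ⟨m, rfl, h, h0, hstep, _⟩ | ⟨_, h, h0, hstep⟩
  · have hnm : n ≤ m := by exact_mod_cast hn
    exact ⟨h n, key h h0 (fun k hk => hstep k (by omega))⟩
  · exact ⟨h n, key h h0 (fun k _ => hstep k)⟩

/-- Condition (3) implies condition (2). -/
lemma cond2_of_cond3
    (h3 : ∀ (s : S) (l₁ l₂ : ℕ∞), HasMaxHistLen g s l₁ → HasMaxHistLen g s l₂ → l₁ = l₂) :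
    ∀ (n : ℕ) (s w : S), g s = g^[n + 1] w → ∃ w', s = g^[n] w' := by
  intro n s w hw
  obtain ⟨lw, hlw⟩ := exists_maxhist g w
  obtain ⟨ls, hls⟩ := exists_maxhist g s
  have h1 : HasMaxHistLen g (g s) (lw + (n+1)) := hw ▸ maxhist_iterate g hlw (n+1)
  have h2 : HasMaxHistLen g (g s) (ls + 1) := maxhist_succ g hls
  have heq : ls + 1 = lw + (n+1) := h3 (g s) _ _ h2 h1
  have heq' : ls + 1 = (lw + n) + 1 := by
    rw [heq]; push_cast; ring
  have : ls = lw + n := WithTop.add_right_cancel (by simp : (1:ℕ∞) ≠ ⊤) heq'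
  apply iter_of_maxhist g hls
  rw [this]
  exact le_add_self

/-- Condition (2) implies condition (4). -/
lemma cond4_of_cond2
    (h2 : ∀ (n : ℕ) (s w : S), g s = g^[n + 1] w → ∃ w', s = g^[n] w') :
    ∃ E : S → S → Prop, Equivalence E ∧ (∀ s w, E s w ↔ E (g s) (g w)) ∧
      ∀ s w, E s (g w) → ∃ w', s = g w' := by
  refine ⟨fun s w => ∀ n : ℕ, (∃ u, s = g^[n] u) ↔ (∃ u, w = g^[n] u),
    ⟨fun s n => Iff.rfl, fun h n => (h n).symm, fun h h' n => (h n).trans (h' n)⟩, ?_, ?_⟩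
  · intro s w
    have key : ∀ x : S, ∀ n : ℕ, (∃ u, g x = g^[n+1] u) ↔ (∃ u, x = g^[n] u) := by
      intro x n
      constructor
      · rintro ⟨u, hu⟩; exact h2 n x u hu
      · rintro ⟨u, rfl⟩; exact ⟨u, (Function.iterate_succ_apply' g n u).symm⟩
    constructor
    · intro h n
      cases n with
      | zero => simp
      | succ n => rw [key s n, key w n]; exact h n
    · intro h n
      have := h (n+1)
      rwa [key s n, key w n] at this
  · intro s w h
    have := (h 1).mpr ⟨w, rfl⟩
    obtain ⟨u, hu⟩ := this
    exact ⟨u, by simpa using hu⟩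

/-- Condition (4) implies condition (2). -/
lemma cond2_of_cond4
    (h4 : ∃ E : S → S → Prop, Equivalence E ∧ (∀ s w, E s w ↔ E (g s) (g w)) ∧
      ∀ s w, E s (g w) → ∃ w', s = g w') :
    ∀ (n : ℕ) (s w : S), g s = g^[n + 1] w → ∃ w', s = g^[n] w' := by
  obtain ⟨E, hE, hsync, hstep⟩ := h4
  have key : ∀ (n : ℕ) (s t : S), E s (g^[n] t) → ∃ w', s = g^[n] w' := by
    intro n
    induction n with
    | zero => intro s t _; exact ⟨s, rfl⟩
    | succ n ih =>
      intro s t h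
      rw [Function.iterate_succ_apply'] at h
      obtain ⟨u, rfl⟩ := hstep s (g^[n] t) h
      have : E u (g^[n] t) := (hsync u (g^[n] t)).mpr h
      obtain ⟨w', rfl⟩ := ih u t this
      exact ⟨w', (Function.iterate_succ_apply' g n w').symm⟩
  intro n s w hw
  apply key n s w
  apply (hsync s (g^[n] w)).mpr
  have hgg : g (g^[n] w) = g s := by rw [hw, Function.iterate_succ_apply']
  rw [hgg]
  exact hE.refl (g s)

end TimedChar

open TimedChar in
/-- **Characterization of timed dynamical systems**: `(S, g)` is timed iff every predecessor of
an `(n+1)`-fold successor is an `n`-fold successor, iff all maximal `g`-histories of the same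
state have the same length, iff there is an equivalence relation on `S` satisfying the two
synchronicity conditions. -/
theorem timed_characterization {S : Type} (g : S → S) :
    ((∃ τ, IsTimingMap g τ) ↔
      ∀ (n : ℕ) (s w : S), g s = g^[n + 1] w → ∃ w', s = g^[n] w') ∧
    ((∃ τ, IsTimingMap g τ) ↔
      ∀ (s : S) (l₁ l₂ : ℕ∞), HasMaxHistLen g s l₁ → HasMaxHistLen g s l₂ → l₁ = l₂) ∧
    ((∃ τ, IsTimingMap g τ) ↔
      ∃ E : S → S → Prop, Equivalence E ∧ (∀ s w, E s w ↔ E (g s) (g w)) ∧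
        ∀ s w, E s (g w) → ∃ w', s = g w') := by
  refine ⟨⟨cond2_of_timed g, timed_of_cond2 g⟩,
    ⟨cond3_of_timed g, fun h => timed_of_cond2 g (cond2_of_cond3 g h)⟩,
    ⟨fun h => cond4_of_cond2 g (cond2_of_timed g h),
     fun h => timed_of_cond2 g (cond2_of_cond4 g h)⟩⟩
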